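/- arXiv:1602.05117 — 2 statements merged into one kernel-verified Lean document; each statement's English description precedes it below -/
import Mathlib

section
/- Let a, b, c, d, α, β be positive real numbers such that a ≤ c, b ≤ d, βd ≤ αb, and such that ψ(a+bt) > 0 and ψ(c+dt) > 0 for all t ∈ [0,∞). Then for every t ∈ [0,1], [ψ(a)]^α/[ψ(c)]^β ≤ [ψ(a+bt)]^α/[ψ(c+dt)]^β ≤ [ψ(a+b)]^α/[ψ(c+d)]^β. -/
/-- The digamma (psi) function: logarithmic derivative of the Gamma function. -/
noncomputable def psi (t : ℝ) : ℝ := deriv Real.Gamma t / Real.Gamma t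

open Real Set

lemma analyticOnNhd_Gamma : AnalyticOnNhd ℝ Real.Gamma (Ioi 0) := by
  have hC : AnalyticOnNhd ℂ Complex.Gamma {s : ℂ | 0 < s.re} := by
    refine DifferentiableOn.analyticOnNhd (fun s hs => ?_) (isOpen_lt continuous_const Complex.continuous_re)
    refine (Complex.differentiableAt_Gamma s (fun m => ?_)).differentiableWithinAt
    intro h
    rw [h] at hs
    simp only [mem_setOf_eq, Complex.neg_re, Complex.natCast_re] at hs
    have : (0:ℝ) ≤ m := Nat.cast_nonneg m
    linarith
  intro x hx
  have h1 : AnalyticAt ℝ (fun y : ℝ => (Complex.Gamma y).re) x := by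
    apply (Complex.reCLM.analyticAt _).comp
    exact ((hC x (by simpa using hx)).restrictScalars).comp (Complex.ofRealCLM.analyticAt x)
  refine h1.congr ?_
  filter_upwards with y
  rw [Complex.Gamma_ofReal, Complex.ofReal_re]

lemma analyticOnNhd_psi : AnalyticOnNhd ℝ psi (Ioi 0) := by
  refine (analyticOnNhd_Gamma.deriv_of_isOpen isOpen_Ioi).div analyticOnNhd_Gamma ?_
  exact fun x hx => (Real.Gamma_pos_of_pos hx).ne'

lemma hasDerivAt_psi {x : ℝ} (hx : 0 < x) : HasDerivAt psi (deriv psi x) x :=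
  ((analyticOnNhd_psi x hx).differentiableAt).hasDerivAt

lemma psi_add_one {x : ℝ} (hx : 0 < x) : psi (x + 1) = psi x + 1 / x := by
  have hΓ : ∀ y : ℝ, 0 < y → HasDerivAt Real.Gamma (deriv Real.Gamma y) y := fun y hy =>
    ((analyticOnNhd_Gamma y hy).differentiableAt).hasDerivAt
  have h1 : HasDerivAt (fun y : ℝ => Real.Gamma (y + 1)) (deriv Real.Gamma (x + 1) * 1) x :=
    by have h := (hΓ (x + 1) (by linarith)).comp x ((hasDerivAt_id x).add_const 1); exact h
  have h2 : HasDerivAt (fun y : ℝ => y * Real.Gamma y) (1 * Real.Gamma x + x * deriv Real.Gamma x) x :=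
    (hasDerivAt_id x).mul (hΓ x hx)
  have heq : (fun y : ℝ => Real.Gamma (y + 1)) =ᶠ[nhds x] fun y => y * Real.Gamma y := by
    filter_upwards [eventually_gt_nhds hx] with y hy
    rw [Real.Gamma_add_one hy.ne']
  have h3 : HasDerivAt (fun y : ℝ => Real.Gamma (y + 1)) (1 * Real.Gamma x + x * deriv Real.Gamma x) x :=
    h2.congr_of_eventuallyEq heq
  have h4 : deriv Real.Gamma (x + 1) = Real.Gamma x + x * deriv Real.Gamma x := by
    have := h1.unique h3; linarith [this]
  have hΓx : Real.Gamma x ≠ 0 := (Real.Gamma_pos_of_pos hx).ne'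
  unfold psi
  rw [h4, Real.Gamma_add_one hx.ne']
  field_simp
  ring

lemma deriv_log_Gamma {x : ℝ} (hx : 0 < x) : deriv (Real.log ∘ Real.Gamma) x = psi x := by
  rw [Function.comp_def, deriv.log ((analyticOnNhd_Gamma x hx).differentiableAt)
    (Real.Gamma_pos_of_pos hx).ne']
  rfl

lemma psi_monotoneOn : MonotoneOn psi (Ioi (0:ℝ)) := by
  intro x hx y hy hxy
  rcases eq_or_lt_of_le hxy with rfl | hlt
  · exact le_refl _
  · have hc : ConvexOn ℝ (Ioi 0) (Real.log ∘ Real.Gamma) := Real.convexOn_log_Gamma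
    have hdx : DifferentiableAt ℝ (Real.log ∘ Real.Gamma) x := by
      rw [Function.comp_def]
      exact ((analyticOnNhd_Gamma x hx).differentiableAt).log (Real.Gamma_pos_of_pos hx).ne'
    have hdy : DifferentiableAt ℝ (Real.log ∘ Real.Gamma) y := by
      rw [Function.comp_def]
      exact ((analyticOnNhd_Gamma y hy).differentiableAt).log (Real.Gamma_pos_of_pos hy).ne'
    have h1 := hc.deriv_le_slope hx hy hlt hdx
    have h2 := hc.slope_le_deriv hx hy hlt hdy
    rw [deriv_log_Gamma hx] at h1
    rw [deriv_log_Gamma hy] at h2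
    exact h1.trans h2


lemma deriv_psi_nonneg {x : ℝ} (hx : 0 < x) : 0 ≤ deriv psi x := by
  have h := (hasDerivAt_psi hx)
  have ht : Filter.Tendsto (slope psi x) (nhdsWithin x (Ioi x)) (nhds (deriv psi x)) :=
    (hasDerivAt_iff_tendsto_slope.mp h).mono_left (nhdsWithin_mono x (by intro y hy; exact ne_of_gt hy))
  refine ge_of_tendsto ht ?_
  filter_upwards [self_mem_nhdsWithin] with y hy
  have hxy : x < y := hy
  have : psi x ≤ psi y := psi_monotoneOn hx (lt_trans hx hxy) hxy.le
  rw [slope_def_field]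
  exact div_nonneg (by linarith) (by linarith)

lemma analyticOnNhd_derivPsi : AnalyticOnNhd ℝ (deriv psi) (Ioi 0) :=
  analyticOnNhd_psi.deriv_of_isOpen isOpen_Ioi

lemma deriv_psi_rec {x : ℝ} (hx : 0 < x) :
    deriv psi x = 1 / x ^ 2 + deriv psi (x + 1) := by
  have h1 : HasDerivAt (fun y : ℝ => psi (y + 1)) (deriv psi (x + 1) * 1) x :=
    (hasDerivAt_psi (by linarith)).comp x ((hasDerivAt_id x).add_const 1)
  have h2 : HasDerivAt (fun y : ℝ => psi y + 1 / y) (deriv psi x + (-1 / x ^ 2)) x := by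
    have := ((hasDerivAt_inv hx.ne').const_mul (1:ℝ)).const_add (0:ℝ)
    have h' : HasDerivAt (fun y : ℝ => 1 / y) (-1 / x ^ 2) x := by
      simpa [one_div, neg_div] using (hasDerivAt_inv hx.ne')
    exact (hasDerivAt_psi hx).add h'
  have heq : (fun y : ℝ => psi (y + 1)) =ᶠ[nhds x] fun y => psi y + 1 / y := by
    filter_upwards [eventually_gt_nhds hx] with y hy
    exact psi_add_one hy
  have h3 : HasDerivAt (fun y : ℝ => psi (y + 1)) (deriv psi x + (-1 / x ^ 2)) x :=
    h2.congr_of_eventuallyEq heq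
  have h4 := h1.unique h3
  rw [mul_one] at h4
  rw [h4]; ring

lemma deriv_psi_sum {x : ℝ} (hx : 0 < x) (N : ℕ) :
    deriv psi x = (∑ n ∈ Finset.range N, 1 / (x + n) ^ 2) + deriv psi (x + N) := by
  induction N with
  | zero => simp
  | succ N ih =>
    rw [ih, Finset.sum_range_succ]
    have h := deriv_psi_rec (x := x + N) (by positivity)
    push_cast
    rw [show x + (N + 1 : ℝ) = x + N + 1 by ring]
    linarith [h]

noncomputable def trig (x : ℝ) : ℝ := ∑' n : ℕ, 1 / (x + n) ^ 2

lemma trig_summable {x : ℝ} (hx : 0 < x) : Summable (fun n : ℕ => 1 / (x + n) ^ 2) := by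
  rw [← summable_nat_add_iff 1]
  refine Summable.of_nonneg_of_le (fun n => by positivity) (fun n => ?_)
    ((summable_nat_add_iff 1).mpr (Real.summable_one_div_nat_pow.mpr one_lt_two))
  push_cast
  have hn : (0:ℝ) ≤ n := Nat.cast_nonneg n
  apply one_div_le_one_div_of_le (by positivity)
  have h1 : ((n:ℝ) + 1) ≤ x + (n + 1) := by linarith
  calc ((n:ℝ) + 1) ^ 2 ≤ (x + (n + 1)) ^ 2 := by nlinarith
    _ = (x + (n + 1)) ^ 2 := rfl

lemma trig_antitone {x y : ℝ} (hx : 0 < x) (hxy : x ≤ y) : trig y ≤ trig x := by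
  refine Summable.tsum_le_tsum (fun n => ?_) (trig_summable (by linarith)) (trig_summable hx)
  have hn : (0:ℝ) ≤ n := Nat.cast_nonneg n
  apply one_div_le_one_div_of_le (by positivity)
  nlinarith

lemma trig_pos {x : ℝ} (hx : 0 < x) : 0 < trig x := by
  have h0 : 0 < 1 / (x + (0:ℕ)) ^ 2 := by
    simp only [Nat.cast_zero, add_zero]
    positivity
  calc 0 < 1 / (x + (0:ℕ)) ^ 2 := h0
    _ ≤ trig x := Summable.le_tsum (trig_summable hx) 0 (fun n _ => by positivity)

lemma trig_le_deriv_psi {x : ℝ} (hx : 0 < x) : trig x ≤ deriv psi x := by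
  refine tsum_le_of_sum_range_le (fun n => by positivity) (fun N => ?_)
  have h := deriv_psi_sum hx N
  have h2 : 0 ≤ deriv psi (x + N) := deriv_psi_nonneg (by positivity)
  linarith

lemma contOn_deriv_psi {s : Set ℝ} (hs : s ⊆ Ioi 0) : ContinuousOn (deriv psi) s :=
  (analyticOnNhd_derivPsi.continuousOn).mono hs

lemma integral_deriv_psi {x : ℝ} (hx : 0 < x) :
    ∫ t in x..(x+1), deriv psi t = 1 / x := by
  have huIcc : Set.uIcc x (x+1) = Icc x (x+1) := uIcc_of_le (by linarith)
  have hsub : Icc x (x+1) ⊆ Ioi 0 := fun t ht => lt_of_lt_of_le hx ht.1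
  have h := intervalIntegral.integral_eq_sub_of_hasDerivAt
    (f := psi) (f' := deriv psi) (a := x) (b := x+1)
    (fun t ht => hasDerivAt_psi (hsub (huIcc ▸ ht)))
    (((contOn_deriv_psi hsub).mono (by rw [huIcc])).intervalIntegrable)
  rw [h, psi_add_one hx]; ring

lemma integral_inv_sq {x : ℝ} (hx : 0 < x) (n : ℕ) :
    ∫ t in x..(x+1), 1 / (t + n) ^ 2 = 1 / (x + n) - 1 / (x + n + 1) := by
  have huIcc : Set.uIcc x (x+1) = Icc x (x+1) := uIcc_of_le (by linarith)
  have hD : ∀ t ∈ Set.uIcc x (x+1), HasDerivAt (fun t : ℝ => -(t + n)⁻¹) (1 / (t + n) ^ 2) t := by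
    intro t ht
    rw [huIcc] at ht
    have hn : (0:ℝ) ≤ n := Nat.cast_nonneg n
    have htn : t + (n:ℝ) ≠ 0 := by
      have h1 := ht.1; intro h; rw [← h] at hn; linarith
    have h1 : HasDerivAt (fun t : ℝ => (t + n)⁻¹) (-((t + n) ^ 2)⁻¹) t :=
      (hasDerivAt_inv htn).comp t ((hasDerivAt_id t).add_const _) |>.congr_deriv (by ring)
    simpa [one_div] using h1.fun_neg
  have hC : ContinuousOn (fun t : ℝ => 1 / (t + n) ^ 2) (Set.uIcc x (x+1)) := by
    rw [huIcc]
    refine ContinuousOn.div continuousOn_const (by fun_prop) (fun t ht => ?_)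
    have hn : (0:ℝ) ≤ n := Nat.cast_nonneg n
    have h1 := ht.1
    have : (0:ℝ) < (t + n) ^ 2 := by nlinarith
    exact this.ne'
  rw [intervalIntegral.integral_eq_sub_of_hasDerivAt hD hC.intervalIntegrable]
  ring

lemma integral_partial_sum {x : ℝ} (hx : 0 < x) (N : ℕ) :
    ∫ t in x..(x+1), (∑ n ∈ Finset.range N, 1 / (t + n) ^ 2) = 1 / x - 1 / (x + N) := by
  have hInt : ∀ n ∈ Finset.range N, IntervalIntegrable (fun t : ℝ => 1 / (t + n) ^ 2) MeasureTheory.volume x (x+1) := by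
    intro n _
    refine ContinuousOn.intervalIntegrable ?_
    rw [uIcc_of_le (by linarith)]
    refine ContinuousOn.div continuousOn_const (by fun_prop) (fun t ht => ?_)
    have hn : (0:ℝ) ≤ n := Nat.cast_nonneg n
    have h1 := ht.1
    have : (0:ℝ) < (t + n) ^ 2 := by nlinarith
    exact this.ne'
  rw [intervalIntegral.integral_finset_sum hInt]
  have : ∀ n ∈ Finset.range N, (∫ t in x..(x+1), 1 / (t + n) ^ 2) = (fun n : ℕ => 1 / (x + n)) n - (fun n : ℕ => 1 / (x + n)) (n+1) := by
    intro n _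
    rw [integral_inv_sq hx n]
    push_cast; ring_nf
  rw [Finset.sum_congr rfl this, Finset.sum_range_sub']
  simp

lemma contOn_PN {x y : ℝ} (hx : 0 < x) (N : ℕ) :
    ContinuousOn (fun t : ℝ => ∑ n ∈ Finset.range N, 1 / (t + n) ^ 2) (Icc x y) := by
  refine continuousOn_finset_sum _ (fun n _ => ?_)
  refine ContinuousOn.div continuousOn_const (by fun_prop) (fun t ht => ?_)
  have hn : (0:ℝ) ≤ n := Nat.cast_nonneg n
  have h1 := ht.1
  have : (0:ℝ) < (t + n) ^ 2 := by nlinarith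
  exact this.ne'

lemma deriv_psi_eq_trig {x : ℝ} (hx : 0 < x) : deriv psi x = trig x := by
  by_contra hne
  have hge := trig_le_deriv_psi hx
  have hδ : 0 < deriv psi x - trig x := sub_pos.mpr (lt_of_le_of_ne hge (fun h => hne h.symm))
  set δ := deriv psi x - trig x with hδdef
  -- continuity of deriv psi at x
  have hcont : ContinuousAt (deriv psi) x := (analyticOnNhd_derivPsi x hx).continuousAt
  obtain ⟨η, hη, hball⟩ := Metric.continuousAt_iff.mp hcont (δ/2) (by linarith)
  set η0 : ℝ := min (η/2) 1 with hη0def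
  have hη0 : 0 < η0 := lt_min (by linarith) one_pos
  have hη01 : η0 ≤ 1 := min_le_right _ _
  have hlow : ∀ t ∈ Icc x (x + η0), deriv psi x - δ/2 ≤ deriv psi t := by
    intro t ht
    have : dist t x < η := by
      rw [Real.dist_eq, abs_sub_lt_iff]
      constructor
      · have := ht.2; have : t - x ≤ η0 := by linarith
        calc t - x ≤ η0 := this
          _ ≤ η/2 := min_le_left _ _
          _ < η := by linarith
      · have := ht.1; linarith
    have := hball this
    rw [Real.dist_eq, abs_sub_lt_iff] at this
    linarith [this.2]
  obtain ⟨N, hN⟩ := exists_nat_gt (2 / (η0 * δ) - x)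
  have hxN : 1 / (x + N) < η0 * δ / 2 := by
    have h1 : 2 / (η0 * δ) < x + N := by linarith
    have h2 : 0 < η0 * δ := by positivity
    have h3 : 0 < x + (N:ℝ) := lt_trans (by positivity) h1
    rw [div_lt_iff₀ h3]
    rw [div_lt_iff₀ h2] at h1
    nlinarith
  set P : ℝ → ℝ := fun t => ∑ n ∈ Finset.range N, 1 / (t + n) ^ 2 with hPdef
  have hφnonneg : ∀ t ∈ Icc x (x+1), 0 ≤ deriv psi t - P t := by
    intro t ht
    have htpos : 0 < t := lt_of_lt_of_le hx ht.1
    have := deriv_psi_sum htpos N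
    have h2 : 0 ≤ deriv psi (t + N) := deriv_psi_nonneg (by positivity)
    simp only [hPdef]; linarith
  have hφlow : ∀ t ∈ Icc x (x + η0), δ/2 ≤ deriv psi t - P t := by
    intro t ht
    have htpos : 0 < t := lt_of_lt_of_le hx ht.1
    have h1 : P t ≤ trig t :=
      Summable.sum_le_tsum (Finset.range N) (fun n _ => by positivity) (trig_summable htpos)
    have h2 : trig t ≤ trig x := trig_antitone hx ht.1
    have h3 := hlow t ht
    simp only [hPdef] at *
    linarith
  -- integrals
  have hIg : IntervalIntegrable (deriv psi) MeasureTheory.volume x (x+1) := by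
    refine ContinuousOn.intervalIntegrable ?_
    rw [uIcc_of_le (by linarith)]
    exact contOn_deriv_psi (fun t ht => lt_of_lt_of_le hx ht.1)
  have hIg' : IntervalIntegrable (deriv psi) MeasureTheory.volume x (x+η0) := by
    refine ContinuousOn.intervalIntegrable ?_
    rw [uIcc_of_le (by linarith)]
    exact contOn_deriv_psi (fun t ht => lt_of_lt_of_le hx ht.1)
  have hIP : IntervalIntegrable P MeasureTheory.volume x (x+1) := by
    refine ContinuousOn.intervalIntegrable ?_
    rw [uIcc_of_le (by linarith)]
    exact contOn_PN hx N
  have hIP' : IntervalIntegrable P MeasureTheory.volume x (x+η0) := by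
    refine ContinuousOn.intervalIntegrable ?_
    rw [uIcc_of_le (by linarith)]
    exact contOn_PN hx N
  have hIφ := hIg.sub hIP
  have hIφ' := hIg'.sub hIP'
  have hIφ'' : IntervalIntegrable (fun t => deriv psi t - P t) MeasureTheory.volume (x+η0) (x+1) := by
    refine ContinuousOn.intervalIntegrable ?_
    rw [uIcc_of_le (by linarith)]
    refine ContinuousOn.sub (contOn_deriv_psi (fun t ht => lt_of_lt_of_le (by linarith) ht.1)) ?_
    exact (contOn_PN hx N).mono (fun t ht => ⟨by linarith [ht.1], ht.2⟩)
  have htot : ∫ t in x..(x+1), (deriv psi t - P t) = 1 / (x + N) := by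
    rw [intervalIntegral.integral_sub hIg hIP, integral_deriv_psi hx, hPdef,
      integral_partial_sum hx N]
    ring
  have hsplit : ∫ t in x..(x+1), (deriv psi t - P t) =
      (∫ t in x..(x+η0), (deriv psi t - P t)) + ∫ t in (x+η0)..(x+1), (deriv psi t - P t) :=
    (intervalIntegral.integral_add_adjacent_intervals hIφ' hIφ'').symm
  have hpart1 : η0 * (δ/2) ≤ ∫ t in x..(x+η0), (deriv psi t - P t) := by
    have := intervalIntegral.integral_mono_on (a := x) (b := x+η0)
      (f := fun _ => δ/2) (g := fun t => deriv psi t - P t) (by linarith)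
      intervalIntegrable_const hIφ' (fun t ht => hφlow t ht)
    have hceq : (∫ _t in x..(x+η0), (δ/2 : ℝ)) = η0 * (δ/2) := by
      rw [intervalIntegral.integral_const, smul_eq_mul]; ring
    calc η0 * (δ/2) = ∫ _t in x..(x+η0), (δ/2 : ℝ) := hceq.symm
      _ ≤ _ := this
  have hpart2 : 0 ≤ ∫ t in (x+η0)..(x+1), (deriv psi t - P t) := by
    refine intervalIntegral.integral_nonneg (by linarith) (fun t ht => ?_)
    exact hφnonneg t ⟨by linarith [ht.1], ht.2⟩
  have : η0 * (δ/2) ≤ 1 / (x + N) := by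
    rw [← htot, hsplit]; linarith
  linarith [hxN, this]

lemma deriv_psi_antitone {x y : ℝ} (hx : 0 < x) (hxy : x ≤ y) :
    deriv psi y ≤ deriv psi x := by
  rw [deriv_psi_eq_trig hx, deriv_psi_eq_trig (lt_of_lt_of_le hx hxy)]
  exact trig_antitone hx hxy

theorem U_bounds (a b c d α β : ℝ) (ha : 0 < a) (hb : 0 < b) (hc : 0 < c)
    (hd : 0 < d) (hα : 0 < α) (hβ : 0 < β) (hac : a ≤ c) (hbd : b ≤ d)
    (hβdαb : β * d ≤ α * b)
    (hpos : ∀ t : ℝ, 0 ≤ t → 0 < psi (a + b * t) ∧ 0 < psi (c + d * t))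
    (t : ℝ) (ht : t ∈ Set.Icc (0 : ℝ) 1) :
    psi a ^ α / psi c ^ β ≤ psi (a + b * t) ^ α / psi (c + d * t) ^ β ∧
      psi (a + b * t) ^ α / psi (c + d * t) ^ β ≤ psi (a + b) ^ α / psi (c + d) ^ β := by
  set F : ℝ → ℝ := fun t => α * Real.log (psi (a + b * t)) - β * Real.log (psi (c + d * t))
    with hF
  have hx0 : ∀ s : ℝ, 0 ≤ s → 0 < a + b * s := fun s hs => by nlinarith
  have hy0 : ∀ s : ℝ, 0 ≤ s → 0 < c + d * s := fun s hs => by nlinarith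
  set G : ℝ → ℝ := fun t => α * (deriv psi (a + b * t) * b / psi (a + b * t)) -
    β * (deriv psi (c + d * t) * d / psi (c + d * t)) with hG
  have key : ∀ s : ℝ, 0 ≤ s → HasDerivAt F (G s) s := by
    intro s hs
    have h1 : HasDerivAt (fun u : ℝ => a + b * u) b s := by
      simpa using ((hasDerivAt_id s).const_mul b).const_add a
    have h1' : HasDerivAt (fun u : ℝ => c + d * u) d s := by
      simpa using ((hasDerivAt_id s).const_mul d).const_add c
    have h2 : HasDerivAt (fun u : ℝ => psi (a + b * u)) (deriv psi (a + b * s) * b) s :=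
      by have h := (hasDerivAt_psi (hx0 s hs)).comp s h1; exact h
    have h2' : HasDerivAt (fun u : ℝ => psi (c + d * u)) (deriv psi (c + d * s) * d) s :=
      by have h := (hasDerivAt_psi (hy0 s hs)).comp s h1'; exact h
    have h3 := (h2.log (hpos s hs).1.ne').const_mul α
    have h3' := (h2'.log (hpos s hs).2.ne').const_mul β
    exact h3.sub h3'
  have hGnonneg : ∀ s : ℝ, 0 ≤ s → 0 ≤ G s := by
    intro s hs
    have hxy : a + b * s ≤ c + d * s := by nlinarith
    have hgy0 : 0 ≤ deriv psi (c + d * s) := deriv_psi_nonneg (hy0 s hs)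
    have hgxy : deriv psi (c + d * s) ≤ deriv psi (a + b * s) :=
      deriv_psi_antitone (hx0 s hs) hxy
    have hψxy : psi (a + b * s) ≤ psi (c + d * s) :=
      psi_monotoneOn (hx0 s hs) (hy0 s hs) hxy
    have hψx := (hpos s hs).1
    have hψy := (hpos s hs).2
    have hratio : deriv psi (c + d * s) / psi (c + d * s) ≤
        deriv psi (a + b * s) / psi (a + b * s) := by
      rw [div_le_div_iff₀ hψy hψx]
      nlinarith
    have hr0 : 0 ≤ deriv psi (c + d * s) / psi (c + d * s) := div_nonneg hgy0 hψy.le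
    have hcalc : β * (deriv psi (c + d * s) * d / psi (c + d * s)) ≤
        α * (deriv psi (a + b * s) * b / psi (a + b * s)) := by
      have e1 : β * (deriv psi (c + d * s) * d / psi (c + d * s)) =
          (β * d) * (deriv psi (c + d * s) / psi (c + d * s)) := by ring
      have e2 : α * (deriv psi (a + b * s) * b / psi (a + b * s)) =
          (α * b) * (deriv psi (a + b * s) / psi (a + b * s)) := by ring
      rw [e1, e2]
      have hβd : 0 ≤ β * d := by positivity
      have hαb0 : 0 ≤ α * b := by positivity
      exact mul_le_mul hβdαb hratio hr0 hαb0
    simp only [hG]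
    linarith
  have hmono : MonotoneOn F (Icc (0:ℝ) 1) := by
    refine monotoneOn_of_deriv_nonneg (convex_Icc 0 1) ?_ ?_ ?_
    · intro s hs
      exact ((key s hs.1).continuousAt).continuousWithinAt
    · intro s hs
      rw [interior_Icc] at hs
      exact ((key s hs.1.le).differentiableAt).differentiableWithinAt
    · intro s hs
      rw [interior_Icc] at hs
      rw [(key s hs.1.le).deriv]
      exact hGnonneg s hs.1.le
  have ht0 := ht.1
  have ht1 := ht.2
  have hF0 : F 0 ≤ F t := hmono (by constructor <;> norm_num) ht ht0
  have hF1 : F t ≤ F 1 := hmono ht (by constructor <;> norm_num) ht1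
  have hexp : ∀ s : ℝ, 0 ≤ s →
      psi (a + b * s) ^ α / psi (c + d * s) ^ β = Real.exp (F s) := by
    intro s hs
    rw [hF, Real.exp_sub,
      Real.rpow_def_of_pos (hpos s hs).1, Real.rpow_def_of_pos (hpos s hs).2,
      mul_comm (Real.log _) α, mul_comm (Real.log _) β]
  have e0 : psi a ^ α / psi c ^ β = Real.exp (F 0) := by
    have := hexp 0 le_rfl
    simpa using this
  have e1 : psi (a + b) ^ α / psi (c + d) ^ β = Real.exp (F 1) := by
    have := hexp 1 zero_le_one
    simpa using this
  have et : psi (a + b * t) ^ α / psi (c + d * t) ^ β = Real.exp (F t) := hexp t ht0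
  rw [e0, e1, et]
  exact ⟨Real.exp_le_exp.mpr hF0, Real.exp_le_exp.mpr hF1⟩
end

section
/- Let m be a positive odd integer and let α, β be real numbers with 0 < α ≤ β. Then the function V(t) = ψ^(m)(α+t)/ψ^(m)(β+t) is non-increasing on [0,∞). -/
open Real Filter Topology

noncomputable def S (p : ℕ) (x : ℝ) : ℝ := ∑' n : ℕ, (1 / ((n : ℝ) + x)) ^ p

lemma term_pos {p : ℕ} {x : ℝ} (hx : 0 < x) (n : ℕ) : 0 < (1 / ((n : ℝ) + x)) ^ p := by
  have : (0:ℝ) < (n:ℝ) + x := by positivity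
  positivity

lemma summable_S {p : ℕ} (hp : 2 ≤ p) {x : ℝ} (hx : 0 < x) :
    Summable (fun n : ℕ => (1 / ((n : ℝ) + x)) ^ p) := by
  have h1 : Summable (fun n : ℕ => (1 / ((n : ℝ) + 1)) ^ p) := by
    have := (Real.summable_one_div_nat_pow (p := p)).mpr hp
    have := (summable_nat_add_iff 1).mpr this
    simpa [div_pow] using this
  apply Summable.of_nonneg_of_le (fun n => by positivity) (fun n => ?_)
    (h1.mul_left (((x+1)/x) ^ p))
  rw [← mul_pow]
  apply pow_le_pow_left₀ (by positivity)
  have hnx : (0:ℝ) < (n:ℝ) + x := by positivity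
  have hn1 : (0:ℝ) < (n:ℝ) + 1 := by positivity
  rw [div_mul_div_comm, div_le_div_iff₀ hnx (by positivity), mul_one, one_mul]
  nlinarith [sq_nonneg x, mul_nonneg (n.cast_nonneg (α := ℝ)) hx.le]

lemma S_pos {p : ℕ} (hp : 2 ≤ p) {x : ℝ} (hx : 0 < x) : 0 < S p x :=
  Summable.tsum_pos (summable_S hp hx) (fun n => (term_pos hx n).le) 0 (term_pos hx 0)

lemma hasDerivAt_term (p : ℕ) (n : ℕ) {x : ℝ} (hx : 0 < x) :
    HasDerivAt (fun y => (1 / ((n : ℝ) + y)) ^ p)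
      (-(p:ℝ) * (1 / ((n : ℝ) + x)) ^ (p+1)) x := by
  have hnx : (0:ℝ) < (n:ℝ) + x := by positivity
  have h1 : HasDerivAt (fun y => (n : ℝ) + y) 1 x := (hasDerivAt_id x).const_add _
  have h2 : HasDerivAt (fun y => ((n : ℝ) + y)⁻¹) (-1 / (((n:ℝ)+x) ^ 2)) x := by
    simpa [Pi.inv_def] using h1.inv hnx.ne'
  have h3 : HasDerivAt (fun y => ((n:ℝ)+y)⁻¹ ^ p)
      (↑p * ((n:ℝ) + x)⁻¹ ^ (p - 1) * (-1 / ((n:ℝ) + x) ^ 2)) x := h2.pow p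
  convert h3 using 1
  · funext y; rw [one_div]
  · rcases Nat.eq_zero_or_pos p with rfl | hp
    · simp
    · have h4 : (1 / ((n:ℝ)+x)) ^ (p+1) = ((n:ℝ) + x)⁻¹ ^ (p - 1) * (1 / ((n:ℝ) + x) ^ 2) := by
        rw [one_div, one_div, show p+1 = (p-1)+2 by omega, pow_add, inv_pow, inv_pow]
      rw [h4]; ring

lemma hasDerivAt_S {p : ℕ} (hp : 2 ≤ p) {x : ℝ} (hx : 0 < x) :
    HasDerivAt (S p) (-(p:ℝ) * S (p+1) x) x := by
  have hx2 : 0 < x / 2 := half_pos hx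
  have key : HasDerivAt (fun z => ∑' n : ℕ, (1 / ((n:ℝ) + z)) ^ p)
      (∑' n : ℕ, -(p:ℝ) * (1 / ((n : ℝ) + x)) ^ (p+1)) x := by
    apply hasDerivAt_tsum_of_isPreconnected
      ((summable_S (p := p+1) (by omega) hx2).mul_left (p:ℝ)) isOpen_Ioi
      (convex_Ioi (x/2)).isPreconnected
      (fun n y hy => hasDerivAt_term p n (hx2.trans hy))
      (fun n y hy => ?_) (Set.mem_Ioi.mpr (half_lt_self hx)) (summable_S hp hx)
      (Set.mem_Ioi.mpr (half_lt_self hx))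
    have hy0 : (0:ℝ) < y := hx2.trans hy
    rw [norm_mul, norm_neg, Real.norm_natCast, Real.norm_eq_abs,
      abs_of_nonneg (term_pos hy0 n).le]
    have hle : (1/((n:ℝ)+y)) ≤ 1/((n:ℝ)+x/2) := by
      apply one_div_le_one_div_of_le (by positivity)
      have := le_of_lt (Set.mem_Ioi.mp hy); linarith
    exact mul_le_mul_of_nonneg_left (pow_le_pow_left₀ (by positivity) hle _) (Nat.cast_nonneg p)
  have : (∑' n : ℕ, -(p:ℝ) * (1 / ((n : ℝ) + x)) ^ (p+1)) = -(p:ℝ) * S (p+1) x := by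
    rw [tsum_mul_left]; rfl
  rw [this] at key
  exact key

noncomputable def F (x : ℝ) : ℝ :=
  -Real.eulerMascheroniConstant + ∑' n : ℕ, (1/((n:ℝ)+1) - 1/((n:ℝ)+x))

lemma summable_F_term {x : ℝ} (hx : 0 < x) :
    Summable (fun n : ℕ => 1/((n:ℝ)+1) - 1/((n:ℝ)+x)) := by
  rw [← summable_abs_iff]
  set c := min 1 x with hc
  have hc0 : 0 < c := lt_min one_pos hx
  apply Summable.of_nonneg_of_le (fun n => abs_nonneg _) (fun n => ?_)
    (((summable_S (p := 2) le_rfl hc0)).mul_left |x - 1|)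
  have hn1 : (0:ℝ) < (n:ℝ) + 1 := by positivity
  have hnx : (0:ℝ) < (n:ℝ) + x := by positivity
  have hid : 1/((n:ℝ)+1) - 1/((n:ℝ)+x) = (x - 1)/(((n:ℝ)+1)*((n:ℝ)+x)) := by
    field_simp
    ring
  have h1 : c ≤ 1 := min_le_left _ _
  have h2 : c ≤ x := min_le_right _ _
  calc |1/((n:ℝ)+1) - 1/((n:ℝ)+x)| = |x-1| / (((n:ℝ)+1)*((n:ℝ)+x)) := by
        rw [hid, abs_div, abs_of_pos (show (0:ℝ) < ((n:ℝ)+1)*((n:ℝ)+x) by positivity)]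
    _ ≤ |x-1| * (1 / ((n:ℝ) + c)) ^ 2 := by
        rw [div_pow, one_pow, div_eq_mul_inv, div_eq_mul_inv, one_mul]
        apply mul_le_mul_of_nonneg_left _ (abs_nonneg _)
        apply inv_anti₀ (by positivity)
        nlinarith [n.cast_nonneg (α := ℝ)]

lemma F_mono {x y : ℝ} (hx : 0 < x) (hxy : x ≤ y) : F x ≤ F y := by
  unfold F
  rw [add_le_add_iff_left]
  apply Summable.tsum_le_tsum _ (summable_F_term hx) (summable_F_term (hx.trans_le hxy))
  intro n
  have hnx : (0:ℝ) < (n:ℝ) + x := by positivity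
  exact sub_le_sub_left (one_div_le_one_div_of_le hnx (by linarith)) _

lemma hasSum_tel {x : ℝ} (hx : 0 < x) :
    HasSum (fun n : ℕ => 1/((n:ℝ)+x) - 1/((n:ℝ)+1+x)) (1/x) := by
  have hpart : ∀ N : ℕ, ∑ i ∈ Finset.range N, (1/((i:ℝ)+x) - 1/((i:ℝ)+1+x))
      = 1/x - 1/((N:ℝ)+x) := by
    intro N
    have := Finset.sum_range_sub' (f := fun i : ℕ => 1/((i:ℝ)+x)) N
    simpa [Nat.cast_succ, add_right_comm] using this
  have hsum : Summable (fun n : ℕ => 1/((n:ℝ)+x) - 1/((n:ℝ)+1+x)) := by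
    apply summable_of_sum_range_le (c := 1/x) (fun n => ?_) (fun N => ?_)
    · have h1 : (0:ℝ) < (n:ℝ) + x := by positivity
      have h2 : (0:ℝ) < (n:ℝ) + 1 + x := by positivity
      have : 1/((n:ℝ)+1+x) ≤ 1/((n:ℝ)+x) := by
        apply one_div_le_one_div_of_le h1; linarith
      linarith
    · rw [hpart]
      have : (0:ℝ) < (N:ℝ) + x := by positivity
      have : 0 ≤ 1/((N:ℝ)+x) := by positivity
      linarith
  rw [hsum.hasSum_iff_tendsto_nat]
  simp_rw [hpart]
  have h1 : Tendsto (fun N : ℕ => ((N:ℝ)+x)) atTop atTop :=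
    tendsto_atTop_add_const_right _ _ tendsto_natCast_atTop_atTop
  have h2 : Tendsto (fun N : ℕ => 1/((N:ℝ)+x)) atTop (𝓝 0) := by
    simpa [one_div, Pi.inv_def] using h1.inv_tendsto_atTop
  simpa using tendsto_const_nhds.sub h2

lemma F_rec {x : ℝ} (hx : 0 < x) : F (x + 1) = F x + 1/x := by
  have h1 := summable_F_term (by linarith : (0:ℝ) < x + 1)
  have h2 := summable_F_term hx
  have key : F (x+1) - F x = 1/x := by
    unfold F
    rw [show ∀ a b c : ℝ, (-c + a) - (-c + b) = a - b by intros; ring]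
    rw [← Summable.tsum_sub h1 h2]
    rw [show (1:ℝ)/x = ∑' n : ℕ, (1/((n:ℝ)+x) - 1/((n:ℝ)+1+x)) from ((hasSum_tel hx).tsum_eq).symm]
    apply tsum_congr
    intro n
    ring_nf
  linarith

lemma Gamma_diff {x : ℝ} (hx : 0 < x) : DifferentiableAt ℝ Real.Gamma x :=
  Real.differentiableAt_Gamma (fun m => by
    have : (0:ℝ) ≤ m := m.cast_nonneg
    intro h; rw [h] at hx; linarith)

lemma logGamma_diff {x : ℝ} (hx : 0 < x) :
    DifferentiableAt ℝ (Real.log ∘ Real.Gamma) x :=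
  (Gamma_diff hx).log (Real.Gamma_pos_of_pos hx).ne'

lemma psi_eq_deriv_logGamma {x : ℝ} (hx : 0 < x) :
    psi x = deriv (Real.log ∘ Real.Gamma) x := by
  rw [Function.comp_def, deriv.log (Gamma_diff hx) (Real.Gamma_pos_of_pos hx).ne']
  rfl

lemma psi_rec {x : ℝ} (hx : 0 < x) : psi (x + 1) = psi x + 1/x := by
  rw [psi_eq_deriv_logGamma (by linarith), psi_eq_deriv_logGamma hx]
  set f := Real.log ∘ Real.Gamma with hf
  have h_rec : ∀ y : ℝ, 0 < y → f (y + 1) = f y + Real.log y := by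
    intro y hy
    simp only [hf, Function.comp_apply, Real.Gamma_add_one hy.ne',
      Real.log_mul hy.ne' (Real.Gamma_pos_of_pos hy).ne', add_comm]
  rw [← deriv_comp_add_const, one_div, ← Real.deriv_log,
    ← deriv_add (logGamma_diff hx) (Real.differentiableAt_log hx.ne')]
  apply Filter.EventuallyEq.deriv_eq
  filter_upwards [eventually_gt_nhds hx] using fun y hy => h_rec y hy

lemma psi_mono {x y : ℝ} (hx : 0 < x) (hxy : x ≤ y) : psi x ≤ psi y := by
  have hy : 0 < y := hx.trans_le hxy
  rw [psi_eq_deriv_logGamma hx, psi_eq_deriv_logGamma hy]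
  exact Real.convexOn_log_Gamma.monotoneOn_deriv
    (fun z hz => logGamma_diff hz) (Set.mem_Ioi.mpr hx) (Set.mem_Ioi.mpr hy) hxy

lemma psi_one : psi 1 = -Real.eulerMascheroniConstant := by
  unfold psi
  rw [Real.Gamma_one, Real.eulerMascheroniConstant_eq_neg_deriv]
  simp

lemma F_one : F 1 = -Real.eulerMascheroniConstant := by
  unfold F; simp

lemma psi_eq_F_nat : ∀ n : ℕ, psi ((n:ℝ)+1) = F ((n:ℝ)+1) := by
  intro n
  induction n with
  | zero => simpa using psi_one.trans F_one.symm
  | succ n ih =>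
    have hn : (0:ℝ) < (n:ℝ) + 1 := by positivity
    push_cast
    rw [show (n:ℝ) + 1 + 1 = ((n:ℝ)+1) + 1 by ring, psi_rec hn, F_rec hn, ih]

lemma shift_inv {x : ℝ} (hx : 0 < x) : ∀ k : ℕ, psi (x + k) - F (x + k) = psi x - F x := by
  intro k
  induction k with
  | zero => simp
  | succ k ih =>
    have hxk : (0:ℝ) < x + k := by positivity
    push_cast
    rw [show x + ((k:ℝ) + 1) = (x + (k:ℝ)) + 1 by ring, psi_rec hxk, F_rec hxk]
    push_cast at ih
    linarith

lemma interval_bound (n : ℕ) {x : ℝ} (h1 : (n:ℝ)+1 ≤ x) (h2 : x ≤ (n:ℝ)+2) :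
    |psi x - F x| ≤ 1/((n:ℝ)+1) := by
  have hn1 : (0:ℝ) < (n:ℝ)+1 := by positivity
  have hx : (0:ℝ) < x := by linarith
  have hA : psi ((n:ℝ)+1) = F ((n:ℝ)+1) := psi_eq_F_nat n
  have hB : psi ((n:ℝ)+2) = F ((n:ℝ)+2) := by
    have := psi_eq_F_nat (n+1); push_cast at this
    rw [show (n:ℝ)+2 = (n:ℝ)+1+1 by ring]; exact this
  have hC : F ((n:ℝ)+2) = F ((n:ℝ)+1) + 1/((n:ℝ)+1) := by
    have := F_rec (x := (n:ℝ)+1) hn1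
    rw [show (n:ℝ)+1+1 = (n:ℝ)+2 by ring] at this; exact this
  have l1 : psi x ≤ F ((n:ℝ)+1) + 1/((n:ℝ)+1) := by
    calc psi x ≤ psi ((n:ℝ)+2) := psi_mono hx h2
    _ = _ := by rw [hB, hC]
  have l2 : F ((n:ℝ)+1) ≤ F x := F_mono hn1 h1
  have l3 : psi ((n:ℝ)+1) ≤ psi x := psi_mono hn1 h1
  have l4 : F x ≤ F ((n:ℝ)+1) + 1/((n:ℝ)+1) := by
    calc F x ≤ F ((n:ℝ)+2) := F_mono hx h2
    _ = _ := hC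
  rw [abs_le]
  constructor <;> [linarith [hA ▸ l3]; linarith]

lemma psi_eq_F {x : ℝ} (hx : 0 < x) : psi x = F x := by
  have key : ∀ k : ℕ, |psi x - F x| ≤ 1/((k:ℝ)+1) := by
    intro k
    set n := ⌊x + k⌋₊ with hn
    have hxk : (0:ℝ) ≤ x + k := by positivity
    have hfl : (n:ℝ) ≤ x + k := Nat.floor_le hxk
    have hfl2 : x + k < (n:ℝ) + 1 := Nat.lt_floor_add_one _
    have hkn : k ≤ n := Nat.le_floor (by push_cast; linarith)
    have hshift := shift_inv hx (k+1)
    have hb : |psi (x + (k+1:ℕ)) - F (x + (k+1:ℕ))| ≤ 1/((n:ℝ)+1) := by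
      apply interval_bound n <;> push_cast <;> linarith
    rw [hshift] at hb
    apply hb.trans
    apply one_div_le_one_div_of_le (by positivity)
    have : (k:ℝ) ≤ n := by exact_mod_cast hkn
    linarith
  have h0 : Tendsto (fun k : ℕ => 1/((k:ℝ)+1)) atTop (𝓝 0) := by
    have h1 : Tendsto (fun k : ℕ => ((k:ℝ)+1)) atTop atTop :=
      tendsto_atTop_add_const_right _ _ tendsto_natCast_atTop_atTop
    simpa [one_div, Pi.inv_def] using h1.inv_tendsto_atTop
  have : |psi x - F x| ≤ 0 := ge_of_tendsto h0 (Eventually.of_forall key)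
  have := abs_nonpos_iff.mp this
  linarith [this]

lemma hasDerivAt_F {x : ℝ} (hx : 0 < x) : HasDerivAt F (S 2 x) x := by
  have hx2 : 0 < x / 2 := half_pos hx
  have key : HasDerivAt (fun z => ∑' n : ℕ, (1/((n:ℝ)+1) - 1/((n:ℝ)+z)))
      (∑' n : ℕ, (1 / ((n : ℝ) + x)) ^ 2) x := by
    apply hasDerivAt_tsum_of_isPreconnected
      (u := fun n : ℕ => (1 / ((n : ℝ) + x/2)) ^ 2)
      (g := fun (n : ℕ) (z : ℝ) => 1/((n:ℝ)+1) - 1/((n:ℝ)+z))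
      (g' := fun (n : ℕ) (z : ℝ) => (1 / ((n : ℝ) + z)) ^ 2)
      (summable_S (p := 2) le_rfl hx2) isOpen_Ioi
      (convex_Ioi (x/2)).isPreconnected
      (fun n y hy => ?_) (fun n y hy => ?_) (Set.mem_Ioi.mpr (half_lt_self hx))
      (summable_F_term hx) (Set.mem_Ioi.mpr (half_lt_self hx))
    · have hy0 : (0:ℝ) < y := hx2.trans hy
      have := (hasDerivAt_term 1 n hy0).const_sub (1/((n:ℝ)+1))
      simpa using this
    · have hy0 : (0:ℝ) < y := hx2.trans hy
      rw [Real.norm_eq_abs, abs_of_nonneg (term_pos hy0 n).le]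
      have hle : (1/((n:ℝ)+y)) ≤ 1/((n:ℝ)+x/2) := by
        apply one_div_le_one_div_of_le (by positivity)
        have := le_of_lt (Set.mem_Ioi.mp hy); linarith
      exact pow_le_pow_left₀ (by positivity) hle _
  exact key.const_add _

lemma iteratedDeriv_psi : ∀ k : ℕ, 1 ≤ k → ∀ {x : ℝ}, 0 < x →
    iteratedDeriv k psi x = (-1:ℝ)^(k+1) * k.factorial * S (k+1) x := by
  intro k
  induction k with
  | zero => omega
  | succ k ih =>
    intro _ x hx
    rcases Nat.eq_zero_or_pos k with rfl | hk
    · rw [iteratedDeriv_one]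
      have hev : psi =ᶠ[𝓝 x] F := by
        filter_upwards [Ioi_mem_nhds hx] with y hy using psi_eq_F hy
      rw [hev.deriv_eq, (hasDerivAt_F hx).deriv]
      norm_num
    · rw [iteratedDeriv_succ]
      have hev : iteratedDeriv k psi =ᶠ[𝓝 x]
          (fun y => (-1:ℝ)^(k+1) * k.factorial * S (k+1) y) := by
        filter_upwards [Ioi_mem_nhds hx] with y hy using ih hk hy
      rw [hev.deriv_eq]
      have hd := ((hasDerivAt_S (p := k+1) (by omega) hx).const_mul
        ((-1:ℝ)^(k+1) * k.factorial)).deriv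
      rw [hd]
      rw [Nat.factorial_succ]
      push_cast
      ring

set_option maxHeartbeats 1000000 in
lemma key_ineq {p : ℕ} (hp : 2 ≤ p) {a b : ℝ} (ha : 0 < a) (hab : a ≤ b) :
    S p a * S (p+1) b ≤ S (p+1) a * S p b := by
  have hb : 0 < b := ha.trans_le hab
  set u : ℕ → ℝ := fun n => 1/((n:ℝ)+a) with hu
  set v : ℕ → ℝ := fun n => 1/((n:ℝ)+b) with hv
  have hu0 : ∀ n, 0 < u n := fun n => by positivity
  have hv0 : ∀ n, 0 < v n := fun n => by positivity
  have hvu : ∀ n, v n ≤ u n := fun n =>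
    one_div_le_one_div_of_le (by positivity) (by linarith)
  have hSu : Summable (fun n => u n ^ p) := summable_S hp ha
  have hSu1 : Summable (fun n => u n ^ (p+1)) := summable_S (by omega) ha
  have hSv : Summable (fun n => v n ^ p) := summable_S hp hb
  have hSv1 : Summable (fun n => v n ^ (p+1)) := summable_S (by omega) hb
  have hW : Summable (fun n => u n ^ p * v n) := by
    apply Summable.of_nonneg_of_le (fun n => by positivity) (fun n => ?_) hSu1
    rw [pow_succ]
    exact mul_le_mul_of_nonneg_left (hvu n) (by positivity)
  set A := ∑' n, u n ^ p * v n with hA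
  -- step 1 : A ≤ S (p+1) a
  have h1 : A ≤ S (p+1) a := by
    apply Summable.tsum_le_tsum (fun n => ?_) hW hSu1
    rw [pow_succ]
    exact mul_le_mul_of_nonneg_left (hvu n) (by positivity)
  -- step 2 : S p a * S (p+1) b ≤ A * S p b
  have h2 : S p a * S (p+1) b ≤ A * S p b := by
    set f : ℕ × ℕ → ℝ := fun q => u q.1 ^ p * v q.1 * v q.2 ^ p - u q.1 ^ p * v q.2 ^ (p+1)
      with hf
    have hg : Summable (fun q : ℕ × ℕ => (u q.1 ^ p * v q.1) * v q.2 ^ p) :=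
      hW.mul_of_nonneg hSv (fun n => by positivity) (fun n => by positivity)
    have hh : Summable (fun q : ℕ × ℕ => u q.1 ^ p * v q.2 ^ (p+1)) :=
      hSu.mul_of_nonneg hSv1 (fun n => by positivity) (fun n => by positivity)
    have hfs : Summable f := hg.sub hh
    have hftsum : ∑' q, f q = A * S p b - S p a * S (p+1) b := by
      rw [hf]
      rw [Summable.tsum_sub hg hh]
      rw [← Summable.tsum_mul_tsum hW hSv hg, ← Summable.tsum_mul_tsum hSu hSv1 hh]
      rfl
    have hswap : ∑' q : ℕ × ℕ, f (q.2, q.1) = ∑' q, f q := by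
      have := (Equiv.prodComm ℕ ℕ).tsum_eq f
      simpa [Equiv.prodComm, Prod.swap] using this
    have hsym : 0 ≤ ∑' q, f q + ∑' q : ℕ × ℕ, f (q.2, q.1) := by
      have hfs2 : Summable (fun q : ℕ × ℕ => f (q.2, q.1)) := by
        have := ((Equiv.prodComm ℕ ℕ).summable_iff (f := f)).mpr hfs
        simpa [Function.comp_def, Equiv.prodComm, Prod.swap] using this
      rw [← Summable.tsum_add hfs hfs2]
      apply tsum_nonneg
      rintro ⟨n, k⟩
      have key : ∀ n k : ℕ, n ≤ k → 0 ≤ f (n, k) + f (k, n) := by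
        intro n k hnk
        have e1 : f (n,k) + f (k,n) = (v n - v k) * (u n ^ p * v k ^ p - u k ^ p * v n ^ p) := by
          simp only [hf]; ring
        rw [e1]
        apply mul_nonneg
        · have : v k ≤ v n := one_div_le_one_div_of_le (by positivity)
            (by push_cast; exact_mod_cast add_le_add_left (Nat.cast_le.mpr hnk) b)
          linarith
        · have huv : u k * v n ≤ u n * v k := by
            rw [hu, hv, div_mul_div_comm, div_mul_div_comm, one_mul]
            apply one_div_le_one_div_of_le (by positivity)
            have hn : (n:ℝ) ≤ k := Nat.cast_le.mpr hnk
            nlinarith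
          have := pow_le_pow_left₀ (by positivity) huv p
          rw [mul_pow, mul_pow] at this
          linarith
      rcases le_total n k with h | h
      · exact key n k h
      · have := key k n h; simp only [Prod.fst, Prod.snd] at *; linarith
    rw [hswap] at hsym
    have : 0 ≤ ∑' q, f q := by linarith
    rw [hftsum] at this
    linarith
  calc S p a * S (p+1) b ≤ A * S p b := h2
    _ ≤ S (p+1) a * S p b := by
        apply mul_le_mul_of_nonneg_right h1
        apply tsum_nonneg (fun n => by positivity)

theorem V_antitone (m : ℕ) (hm : 0 < m) (hodd : Odd m) (α β : ℝ)
    (hα : 0 < α) (hαβ : α ≤ β) :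
    AntitoneOn (fun t : ℝ => iteratedDeriv m psi (α + t) / iteratedDeriv m psi (β + t))
      (Set.Ici 0) := by
  set p := m + 1 with hp
  have hp2 : 2 ≤ p := by omega
  set W : ℝ → ℝ := fun t => S p (α + t) / S p (β + t) with hW
  -- the target function equals W on Ici 0
  have heq : ∀ t : ℝ, 0 ≤ t →
      iteratedDeriv m psi (α + t) / iteratedDeriv m psi (β + t) = W t := by
    intro t ht
    have ha : 0 < α + t := by linarith
    have hb : 0 < β + t := by linarith
    have hsign : ((-1:ℝ))^(m+1) = 1 := (hodd.add_one).neg_one_pow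
    rw [iteratedDeriv_psi m hm ha, iteratedDeriv_psi m hm hb, hsign, one_mul]
    exact mul_div_mul_left _ _ (Nat.cast_ne_zero.mpr m.factorial_ne_zero)
  -- derivative of W
  have hWd : ∀ t : ℝ, 0 ≤ t → HasDerivAt W
      ((-(p:ℝ) * S (p+1) (α + t) * S p (β + t) -
        S p (α + t) * (-(p:ℝ) * S (p+1) (β + t))) / (S p (β + t))^2) t := by
    intro t ht
    have ha : 0 < α + t := by linarith
    have hb : 0 < β + t := by linarith
    have haff : ∀ c : ℝ, HasDerivAt (fun s : ℝ => c + s) 1 t := fun c =>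
      (hasDerivAt_id t).const_add c
    have hnum : HasDerivAt (fun s => S p (α + s)) (-(p:ℝ) * S (p+1) (α + t)) t := by
      have := (hasDerivAt_S hp2 ha).comp t (haff α)
      rw [mul_one] at this; exact this
    have hden : HasDerivAt (fun s => S p (β + s)) (-(p:ℝ) * S (p+1) (β + t)) t := by
      have := (hasDerivAt_S hp2 hb).comp t (haff β)
      rw [mul_one] at this; exact this
    exact hnum.div hden (S_pos hp2 hb).ne'
  have hanti : AntitoneOn W (Set.Ici 0) := by
    apply antitoneOn_of_deriv_nonpos (convex_Ici 0)
    · exact fun t ht => ((hWd t ht).continuousAt).continuousWithinAt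
    · intro t ht
      rw [interior_Ici] at ht
      exact ((hWd t (le_of_lt ht)).differentiableAt).differentiableWithinAt
    · intro t ht
      rw [interior_Ici] at ht
      have ht' : (0:ℝ) ≤ t := le_of_lt ht
      rw [(hWd t ht').deriv]
      apply div_nonpos_of_nonpos_of_nonneg _ (sq_nonneg _)
      have ha : 0 < α + t := by linarith
      have hab : α + t ≤ β + t := by linarith
      have hk := key_ineq hp2 ha hab
      have hp0 : (0:ℝ) < (p:ℝ) := by positivity
      nlinarith [hk]
  intro x hx y hy hxy
  simp only
  rw [heq x hx, heq y hy]
  exact hanti hx hy hxy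
end
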